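/- (Radial eigenfunctions from the ODE.) Let n ≥ 2, p > 1, λ > 0 and R > 0. Let z : ℝ → ℝ be C¹ on [0,R] with z > 0 on [0,R), z(R) = 0 and z'(0) = 0, and suppose that the function w(t) := t^{n−1} |z'(t)|^{p−2} z'(t) is differentiable on (0,R) with w'(t) = −λ t^{n−1} z(t)^{p−1} for every t ∈ (0,R). Then the radial function v(x) := z(‖x‖) is a weak solution of Δ_p v + λ v^{p−1} = 0 on the Euclidean ball B(0,R), is positive on B(0,R), and extends continuously to the closed ball with value 0 on the boundary sphere; in particular R is an eigen-radius for λ. -/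

import Mathlib

open Metric Set MeasureTheory
noncomputable section

/-- Euclidean `n`-space. -/
abbrev Euc (n : ℕ) := EuclideanSpace ℝ (Fin n)

/-- `u` is a weak solution of `Δ_p u + f (u) = 0` on `Ω ⊆ ℝⁿ`:
`u` is `C¹` on `Ω` and the weak formulation holds against all smooth test functions
compactly supported in `Ω`.  (When `∇u x = 0` the integrand on the left-hand side
vanishes automatically, since the inner product factor is `0`.) -/
def IsWeakSolution (n : ℕ) (p : ℝ) (Ω : Set (Euc n)) (f : ℝ → ℝ) (u : Euc n → ℝ) : Prop :=
  ContDiffOn ℝ 1 u Ω ∧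
  ∀ φ : Euc n → ℝ, ContDiff ℝ (⊤ : ℕ∞) φ → HasCompactSupport φ → tsupport φ ⊆ Ω →
    ∫ x in Ω, ‖gradient u x‖ ^ (p - 2) * (inner ℝ (gradient u x) (gradient φ x) : ℝ)
      = ∫ x in Ω, f (u x) * φ x

/-- `R > 0` is an eigen-radius for `lam`: the ball of radius `R` carries a positive
weak solution of `Δ_p v + lam·v^(p-1) = 0` vanishing continuously on the boundary sphere. -/
def IsEigenRadius (n : ℕ) (p lam R : ℝ) : Prop :=
  0 < R ∧ ∃ v : Euc n → ℝ,
    IsWeakSolution n p (ball 0 R) (fun t => lam * t ^ (p - 1)) v ∧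
    (∀ x ∈ ball (0 : Euc n) R, 0 < v x) ∧
    ContinuousOn v (closedBall 0 R) ∧
    ∀ x ∈ sphere (0 : Euc n) R, v x = 0

/-- `Ω` is a `C²` domain with defining function `Φ`. -/
structure IsC2Domain {n : ℕ} (Ω : Set (Euc n)) (Φ : Euc n → ℝ) : Prop where
  isOpen : IsOpen Ω
  isConnected : IsConnected Ω
  smooth : ContDiff ℝ 2 Φ
  eq_sublevel : Ω = {x | Φ x < 0}
  frontier_eq : frontier Ω = {x | Φ x = 0}
  grad_ne_zero : ∀ x ∈ frontier Ω, gradient Φ x ≠ 0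

/-- `Ω` is an `f`-extremal domain for the `p`-Laplacian, with `C²` defining function `Φ`:
there is a positive weak solution of `Δ_p u + f (u) = 0` on `Ω`, extending continuously by
`0` to the boundary, whose gradient extends continuously to `closure Ω` with constant
normal derivative `⟨∇u, ν⟩ = c` along `frontier Ω`. -/
def IsExtremalDomain (n : ℕ) (p : ℝ) (f : ℝ → ℝ) (Ω : Set (Euc n)) (Φ : Euc n → ℝ) : Prop :=
  IsC2Domain Ω Φ ∧ (∃ K, LipschitzOnWith K f (Ici 0)) ∧
  ∃ (u : Euc n → ℝ) (G : Euc n → Euc n) (c : ℝ),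
    IsWeakSolution n p Ω f u ∧ (∀ x ∈ Ω, 0 < u x) ∧
    ContinuousOn u (closure Ω) ∧ (∀ x ∈ frontier Ω, u x = 0) ∧
    ContinuousOn G (closure Ω) ∧ (∀ x ∈ Ω, G x = gradient u x) ∧
    ∀ x ∈ frontier Ω, (inner ℝ (G x) (‖gradient Φ x‖⁻¹ • gradient Φ x) : ℝ) = c

/-! ### Auxiliary lemmas -/

lemma continuous_qfun {p : ℝ} (hp : 1 < p) :
    Continuous fun s : ℝ => |s| ^ (p - 2) * s := by
  rw [continuous_iff_continuousAt]
  intro s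
  rcases eq_or_ne s 0 with rfl | hs
  · have h0 : |(0:ℝ)| ^ (p - 2) * (0:ℝ) = 0 := by simp
    unfold ContinuousAt
    simp only [h0]
    apply squeeze_zero_norm (a := fun t : ℝ => |t| ^ (p - 1))
    · intro t
      rcases eq_or_ne t 0 with rfl | ht
      · simp [Real.zero_rpow (by intro h; nlinarith : p - 1 ≠ 0)]
      · have habs : |t| ≠ 0 := abs_ne_zero.2 ht
        have h1 : ‖|t| ^ (p - 2) * t‖ = |t| ^ (p - 2) * |t| := by
          rw [Real.norm_eq_abs, abs_mul, abs_of_nonneg (Real.rpow_nonneg (abs_nonneg t) _)]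
        rw [h1, ← Real.rpow_add_one habs]
        ring_nf
        exact le_refl _
    · have hra : ContinuousAt (fun u : ℝ => u ^ (p - 1)) (|(0:ℝ)|) := by
        rw [abs_zero]; exact Real.continuousAt_rpow_const 0 (p - 1) (Or.inr (by linarith))
      have h2 := hra.comp (continuous_abs.continuousAt (x := (0:ℝ)))
      have h3 : |(0:ℝ)| ^ (p - 1) = 0 := by
        rw [abs_zero, Real.zero_rpow]; intro h; nlinarith
      have h4 : (0:ℝ) ^ (p - 1) = 0 := Real.zero_rpow (by intro h; nlinarith)
      simpa [ContinuousAt, Function.comp_def, h4] using h2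
  · exact (((Real.continuousAt_rpow_const |s| (p - 2)
      (Or.inl (abs_ne_zero.2 hs))).comp continuous_abs.continuousAt).mul continuousAt_id)

section InnerSpace

variable {E : Type*} [NormedAddCommGroup E] [InnerProductSpace ℝ E]

lemma hasFDerivAt_norm_ne {x : E} (hx : x ≠ 0) :
    HasFDerivAt (fun y : E => ‖y‖) (innerSL ℝ (‖x‖⁻¹ • x)) x := by
  have hxn : ‖x‖ ≠ 0 := norm_ne_zero_iff.2 hx
  have hinner : HasFDerivAt (fun y : E => (inner ℝ y y : ℝ))
      ((fderivInnerCLM ℝ (x, x)).comp ((ContinuousLinearMap.id ℝ E).prod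
        (ContinuousLinearMap.id ℝ E))) x :=
    (hasFDerivAt_id x).inner ℝ (hasFDerivAt_id x)
  have hself : (inner ℝ x x : ℝ) ≠ 0 := by
    rw [real_inner_self_eq_norm_mul_norm]
    positivity
  have hsqrt : HasDerivAt Real.sqrt (1 / (2 * Real.sqrt (inner ℝ x x : ℝ))) (inner ℝ x x : ℝ) :=
    Real.hasDerivAt_sqrt hself
  have hcomp := HasDerivAt.comp_hasFDerivAt (f := fun y : E => (inner ℝ y y : ℝ)) x hsqrt hinner
  have hfun : (fun y : E => Real.sqrt (inner ℝ y y : ℝ)) = fun y : E => ‖y‖ := by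
    funext y
    rw [real_inner_self_eq_norm_mul_norm, Real.sqrt_mul_self (norm_nonneg y)]
  rw [show ((Real.sqrt ∘ fun y : E => (inner ℝ y y : ℝ)) = fun y : E => ‖y‖) from hfun ▸ rfl]
    at hcomp
  refine hcomp.congr_fderiv ?_
  ext y
  simp only [innerSL_apply_apply, ContinuousLinearMap.coe_smul', Pi.smul_apply,
    ContinuousLinearMap.coe_comp', Function.comp_apply, ContinuousLinearMap.prod_apply,
    ContinuousLinearMap.coe_id', id, fderivInnerCLM_apply, smul_eq_mul]
  rw [real_inner_smul_left, real_inner_self_eq_norm_mul_norm,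
    Real.sqrt_mul_self (norm_nonneg x), real_inner_comm y x]
  field_simp
  ring

variable [CompleteSpace E]

lemma inner_gradient_apply (φ : E → ℝ) (x v : E) :
    (inner ℝ (gradient φ x) v : ℝ) = fderiv ℝ φ x v := by
  unfold gradient
  exact InnerProductSpace.toDual_symm_apply

lemma hasGradientAt_radial {z z' : ℝ → ℝ} {R : ℝ}
    (hz : ∀ t ∈ Icc (0:ℝ) R, HasDerivWithinAt z (z' t) (Icc 0 R) t)
    {x : E} (hx : x ≠ 0) (hxR : ‖x‖ < R) :
    HasGradientAt (fun y : E => z ‖y‖) (z' ‖x‖ • (‖x‖⁻¹ • x)) x := by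
  have hr0 : 0 < ‖x‖ := norm_pos_iff.2 hx
  have hmem : Icc (0:ℝ) R ∈ nhds ‖x‖ := Icc_mem_nhds hr0 hxR
  have hz1 : HasDerivAt z (z' ‖x‖) ‖x‖ := (hz ‖x‖ ⟨hr0.le, hxR.le⟩).hasDerivAt hmem
  have h2 := HasDerivAt.comp_hasFDerivAt (f := fun y : E => ‖y‖) x hz1 (hasFDerivAt_norm_ne hx)
  rw [hasGradientAt_iff_hasFDerivAt]
  have heq : InnerProductSpace.toDual ℝ E (z' ‖x‖ • (‖x‖⁻¹ • x))
      = z' ‖x‖ • innerSL ℝ (‖x‖⁻¹ • x) := by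
    ext y
    simp only [InnerProductSpace.toDual_apply_apply, ContinuousLinearMap.coe_smul', Pi.smul_apply,
      innerSL_apply_apply, smul_eq_mul]
    rw [real_inner_smul_left]
  rw [heq]
  exact h2

lemma hasGradientAt_radial_zero {z z' : ℝ → ℝ} {R : ℝ} (hR : 0 < R)
    (hz : HasDerivWithinAt z (z' 0) (Icc 0 R) 0) (hz'0 : z' 0 = 0) :
    HasGradientAt (fun y : E => z ‖y‖) 0 0 := by
  have hz0 : HasDerivWithinAt z 0 (Icc 0 R) 0 := by rw [hz'0] at hz; exact hz
  have hlittle : (fun t => z t - z 0) =o[nhdsWithin 0 (Icc 0 R)] (fun t => t) := by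
    have := (hasDerivWithinAt_iff_isLittleO).mp hz0
    simpa using this
  have hnorm : Filter.Tendsto (fun y : E => ‖y‖) (nhds 0) (nhdsWithin 0 (Icc 0 R)) := by
    rw [tendsto_nhdsWithin_iff]
    constructor
    · simpa using tendsto_norm_zero
    · filter_upwards [ball_mem_nhds (0:E) hR] with y hy
      exact ⟨norm_nonneg y, (mem_ball_zero_iff.1 hy).le⟩
  have ho : (fun y : E => z ‖y‖ - z 0) =o[nhds 0] (fun y : E => ‖y‖) :=
    hlittle.comp_tendsto hnorm
  have hO : (fun y : E => ‖y‖) =O[nhds (0:E)] (fun y : E => y) := by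
    apply Asymptotics.IsBigO.of_bound 1
    filter_upwards with y
    simp
  have hF : HasFDerivAt (fun y : E => z ‖y‖) (0 : E →L[ℝ] ℝ) 0 := by
    rw [hasFDerivAt_iff_isLittleO_nhds_zero]
    simpa [norm_zero] using ho.trans_isBigO hO
  have := hasFDerivAt_iff_hasGradientAt.mp hF
  simpa using this

lemma radial_C1 {z z' : ℝ → ℝ} {R : ℝ} (hR : 0 < R)
    (hz : ∀ t ∈ Icc (0:ℝ) R, HasDerivWithinAt z (z' t) (Icc 0 R) t)
    (hz'c : ContinuousOn z' (Icc 0 R)) (hz'0 : z' 0 = 0) :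
    ContDiffOn ℝ 1 (fun y : E => z ‖y‖) (ball 0 R) ∧
    ∀ x ∈ ball (0:E) R, gradient (fun y : E => z ‖y‖) x = z' ‖x‖ • (‖x‖⁻¹ • x) := by
  set Gv : E → E := fun x => z' ‖x‖ • (‖x‖⁻¹ • x) with hGv
  have hGv0 : Gv 0 = 0 := by simp [hGv]
  have hgrad : ∀ x ∈ ball (0:E) R, HasGradientAt (fun y : E => z ‖y‖) (Gv x) x := by
    intro x hx
    rcases eq_or_ne x 0 with rfl | hx0
    · rw [hGv0]
      exact hasGradientAt_radial_zero hR (hz 0 ⟨le_refl _, hR.le⟩) hz'0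
    · exact hasGradientAt_radial hz hx0 (mem_ball_zero_iff.1 hx)
  have hmaps : ∀ x ∈ ball (0:E) R, ‖x‖ ∈ Icc (0:ℝ) R := fun x hx =>
    ⟨norm_nonneg x, (mem_ball_zero_iff.1 hx).le⟩
  have hz'norm : ContinuousOn (fun x : E => z' ‖x‖) (ball 0 R) :=
    hz'c.comp continuous_norm.continuousOn hmaps
  have hGvcont : ContinuousOn Gv (ball 0 R) := by
    intro x hx
    rcases eq_or_ne x 0 with rfl | hx0
    · have hb : ∀ y : E, ‖Gv y‖ ≤ |z' ‖y‖| := by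
        intro y
        rw [hGv]
        simp only [norm_smul, Real.norm_eq_abs]
        rcases eq_or_ne y 0 with rfl | hy0
        · simp
        · have h5 : |‖y‖⁻¹| * ‖y‖ = 1 := by
            rw [abs_of_nonneg (inv_nonneg.2 (norm_nonneg y)),
              inv_mul_cancel₀ (norm_ne_zero_iff.2 hy0)]
          rw [h5, mul_one]
      have htz : Filter.Tendsto (fun y : E => |z' ‖y‖|) (nhdsWithin 0 (ball 0 R)) (nhds 0) := by
        have h1 : ContinuousWithinAt (fun x : E => z' ‖x‖) (ball 0 R) 0 :=
          hz'norm 0 (mem_ball_self hR)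
        have := continuous_abs.continuousAt.tendsto.comp h1.tendsto
        simpa [norm_zero, hz'0, Function.comp_def] using this
      unfold ContinuousWithinAt
      rw [hGv0]
      exact squeeze_zero_norm hb htz
    · have h2 : ContinuousWithinAt (fun y : E => ‖y‖⁻¹ • y) (ball 0 R) x :=
        (((continuous_norm.continuousAt).inv₀
          (norm_ne_zero_iff.2 hx0)).smul continuousAt_id).continuousWithinAt
      exact (hz'norm x hx).smul h2
  constructor
  · rw [show (1 : WithTop ℕ∞) = 0 + 1 by norm_num,
      contDiffOn_succ_iff_fderiv_of_isOpen isOpen_ball]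
    refine ⟨fun x hx => ((hgrad x hx).differentiableAt).differentiableWithinAt, by simp, ?_⟩
    rw [contDiffOn_zero]
    apply ContinuousOn.congr
      ((InnerProductSpace.toDual ℝ E).continuous.comp_continuousOn hGvcont)
    intro x hx
    exact ((hgrad x hx).hasFDerivAt).fderiv
  · intro x hx
    exact (hgrad x hx).gradient

end InnerSpace

section Polar

variable {E : Type*} [NormedAddCommGroup E] [NormedSpace ℝ E]
  [MeasurableSpace E] [BorelSpace E] [FiniteDimensional ℝ E] [Nontrivial E]
  (μ : Measure E) [μ.IsAddHaarMeasure]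

lemma polar_integral (F : E → ℝ) :
    ∫ x, F x ∂μ = ∫ q : sphere (0:E) 1 × Ioi (0:ℝ), F (q.2.1 • q.1.1)
      ∂(μ.toSphere.prod (Measure.volumeIoiPow (Module.finrank ℝ E - 1))) := by
  have h1 : ∫ x, F x ∂μ = ∫ x : ({0}ᶜ : Set E), F x.1 ∂(μ.comap Subtype.val) := by
    rw [integral_subtype_comap (measurableSet_singleton (0:E)).compl fun x => F x,
      restrict_compl_singleton]
  rw [h1]
  have h2 := μ.measurePreserving_homeomorphUnitSphereProd.integral_comp
    (Homeomorph.measurableEmbedding _)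
    (fun q : sphere (0:E) 1 × Ioi (0:ℝ) => F (q.2.1 • q.1.1))
  rw [← h2]
  apply integral_congr_ae
  filter_upwards with x
  congr 1
  rw [← homeomorphUnitSphereProd_symm_apply_coe, Homeomorph.symm_apply_apply]

lemma polar_integrable_iff (F : E → ℝ) (hF : Integrable F μ) :
    Integrable (fun q : sphere (0:E) 1 × Ioi (0:ℝ) => F (q.2.1 • q.1.1))
      (μ.toSphere.prod (Measure.volumeIoiPow (Module.finrank ℝ E - 1))) := by
  rw [← μ.measurePreserving_homeomorphUnitSphereProd.integrable_comp_emb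
    (Homeomorph.measurableEmbedding _)]
  have heq : ((fun q : sphere (0:E) 1 × Ioi (0:ℝ) => F (q.2.1 • q.1.1)) ∘
      (homeomorphUnitSphereProd E)) = fun x : ({0}ᶜ : Set E) => F x.1 := by
    funext x
    simp only [Function.comp_apply]
    congr 1
    rw [← homeomorphUnitSphereProd_symm_apply_coe, Homeomorph.symm_apply_apply]
  rw [heq]
  have hmap : Integrable F ((μ.comap (Subtype.val :  ({0}ᶜ : Set E) → E)).map Subtype.val) := by
    rw [map_comap_subtype_coe (measurableSet_singleton (0:E)).compl,
      restrict_compl_singleton]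
    exact hF
  exact ((MeasurableEmbedding.subtype_coe
    (measurableSet_singleton (0:E)).compl).integrable_map_iff).mp hmap

lemma integral_volumeIoiPow (k : ℕ) (f : ℝ → ℝ) :
    ∫ r : Ioi (0:ℝ), f r ∂(Measure.volumeIoiPow k)
      = ∫ r in Ioi (0:ℝ), r ^ k * f r := by
  simp only [Measure.volumeIoiPow, ENNReal.ofReal]
  rw [integral_withDensity_eq_integral_smul
    ((measurable_subtype_coe.pow_const k).real_toNNReal) (fun r : Ioi (0:ℝ) => f r)]
  rw [integral_subtype_comap measurableSet_Ioi
    (fun a : ℝ => Real.toNNReal (a ^ k) • f a)]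
  apply setIntegral_congr_fun measurableSet_Ioi
  intro x hx
  simp only [NNReal.smul_def, Real.coe_toNNReal _ (pow_nonneg (le_of_lt hx) k), smul_eq_mul]

end Polar

lemma onedim_ibp (n : ℕ) (hn : 2 ≤ n) {p lam R : ℝ} (hp : 1 < p) (hR : 0 < R)
    {z z' w : ℝ → ℝ}
    (hz : ∀ t ∈ Icc (0:ℝ) R, HasDerivWithinAt z (z' t) (Icc 0 R) t)
    (hz'c : ContinuousOn z' (Icc 0 R))
    (hw : w = fun t => t ^ (n - 1) * (|z' t| ^ (p - 2) * z' t))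
    (hode : ∀ t ∈ Ioo (0:ℝ) R, HasDerivAt w (-(lam * t ^ (n - 1) * z t ^ (p - 1))) t)
    {ψ D : ℝ → ℝ} (hψ : ∀ r, HasDerivAt ψ (D r) r) (hDc : Continuous D)
    (hψc : Continuous ψ) (hψR : ψ R = 0) :
    ∫ r in (0:ℝ)..R, w r * D r
      = ∫ r in (0:ℝ)..R, lam * r ^ (n-1) * z r ^ (p-1) * ψ r := by
  have huIcc : uIcc (0:ℝ) R = Icc 0 R := uIcc_of_le hR.le
  have hzc : ContinuousOn z (Icc 0 R) := fun t ht => (hz t ht).continuousWithinAt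
  have hwcont : ContinuousOn w (Icc 0 R) := by
    rw [hw]
    exact (continuous_pow (n-1)).continuousOn.mul
      ((continuous_qfun hp).comp_continuousOn hz'c)
  have hC1 : ContinuousOn (fun r : ℝ => -(lam * r ^ (n-1) * z r ^ (p-1)) * ψ r) (Icc 0 R) := by
    apply ContinuousOn.mul _ hψc.continuousOn
    apply ContinuousOn.neg
    apply ContinuousOn.mul
    · exact (continuous_const.mul (continuous_pow (n-1))).continuousOn
    · exact hzc.rpow_const (fun x hx => Or.inr (by linarith))
  have hC2 : ContinuousOn (fun r : ℝ => w r * D r) (Icc 0 R) := hwcont.mul hDc.continuousOn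
  have hint1 : IntervalIntegrable (fun r : ℝ => -(lam * r ^ (n-1) * z r ^ (p-1)) * ψ r)
      volume 0 R := (huIcc ▸ hC1).intervalIntegrable
  have hint2 : IntervalIntegrable (fun r : ℝ => w r * D r) volume 0 R :=
    (huIcc ▸ hC2).intervalIntegrable
  have hA : ∀ r ∈ Ioo (0:ℝ) R, HasDerivWithinAt (fun t => w t * ψ t)
      (-(lam * r ^ (n-1) * z r ^ (p-1)) * ψ r + w r * D r) (Ioi r) r :=
    fun r hr => ((hode r hr).mul (hψ r)).hasDerivWithinAt
  have hftc := intervalIntegral.integral_eq_sub_of_hasDeriv_right_of_le hR.le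
    (hwcont.mul hψc.continuousOn) hA (hint1.add hint2)
  rw [intervalIntegral.integral_add hint1 hint2] at hftc
  have hw0 : w 0 = 0 := by
    rw [hw]
    simp [zero_pow (by omega : n - 1 ≠ 0)]
  rw [Pi.mul_apply, Pi.mul_apply, hψR, hw0] at hftc
  have h2 : ∫ r in (0:ℝ)..R, w r * D r
      = - ∫ r in (0:ℝ)..R, -(lam * r ^ (n-1) * z r ^ (p-1)) * ψ r := by
    rw [mul_zero, zero_mul, sub_zero] at hftc
    linarith
  rw [h2, ← intervalIntegral.integral_neg]
  apply intervalIntegral.integral_congr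
  intro r _
  ring

theorem radial_eigenfunction (n : ℕ) (hn : 2 ≤ n) (p : ℝ) (hp : 1 < p)
    (lam : ℝ) (hlam : 0 < lam) (R : ℝ) (hR : 0 < R)
    (z z' : ℝ → ℝ)
    (hz : ∀ t ∈ Icc (0 : ℝ) R, HasDerivWithinAt z (z' t) (Icc 0 R) t)
    (hz'c : ContinuousOn z' (Icc 0 R))
    (hzpos : ∀ t ∈ Ico (0 : ℝ) R, 0 < z t) (hzR : z R = 0) (hz'0 : z' 0 = 0)
    (w : ℝ → ℝ) (hw : w = fun t => t ^ (n - 1) * (|z' t| ^ (p - 2) * z' t))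
    (hode : ∀ t ∈ Ioo (0 : ℝ) R, HasDerivAt w (-(lam * t ^ (n - 1) * z t ^ (p - 1))) t) :
    (IsWeakSolution n p (ball 0 R) (fun t => lam * t ^ (p - 1)) (fun x : Euc n => z ‖x‖) ∧
      (∀ x ∈ ball (0 : Euc n) R, 0 < z ‖x‖) ∧
      ContinuousOn (fun x : Euc n => z ‖x‖) (closedBall 0 R) ∧
      (∀ x ∈ sphere (0 : Euc n) R, z ‖x‖ = 0)) ∧
    IsEigenRadius n p lam R := by
  classical
  haveI : Nontrivial (Euc n) :=
    Module.nontrivial_of_finrank_pos (R := ℝ) (by rw [finrank_euclideanSpace_fin]; omega)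
  have hzc : ContinuousOn z (Icc 0 R) := fun t ht => (hz t ht).continuousWithinAt
  have hA := radial_C1 (E := Euc n) hR hz hz'c hz'0
  have hpos : ∀ x ∈ ball (0 : Euc n) R, 0 < z ‖x‖ := fun x hx =>
    hzpos ‖x‖ ⟨norm_nonneg x, mem_ball_zero_iff.1 hx⟩
  have hcont : ContinuousOn (fun x : Euc n => z ‖x‖) (closedBall 0 R) :=
    hzc.comp continuous_norm.continuousOn
      (fun x hx => ⟨norm_nonneg x, mem_closedBall_zero_iff.1 hx⟩)
  have hsph : ∀ x ∈ sphere (0 : Euc n) R, z ‖x‖ = 0 := fun x hx => by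
    rw [mem_sphere_zero_iff_norm.1 hx, hzR]
  have hweak : IsWeakSolution n p (ball 0 R) (fun t => lam * t ^ (p - 1))
      (fun x : Euc n => z ‖x‖) := by
    refine ⟨hA.1, ?_⟩
    intro φ hφ hφsupp hφsub
    set q : ℝ → ℝ := fun s => |s| ^ (p - 2) * s with hq
    set Gfun : Euc n → ℝ := fun x =>
      q (z' (min ‖x‖ R)) * (inner ℝ ((‖x‖⁻¹ • x : Euc n)) (gradient φ x) : ℝ) with hGdef
    set Hfun : Euc n → ℝ := fun x => lam * z (min ‖x‖ R) ^ (p - 1) * φ x with hHdef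
    have hgradφc : Continuous (gradient φ) := by
      have h1 : Continuous (fderiv ℝ φ) := hφ.continuous_fderiv (by simp)
      exact ((InnerProductSpace.toDual ℝ (Euc n)).symm.continuous.comp h1 : _)
    have hφ0 : ∀ x : Euc n, x ∉ ball (0:Euc n) R → φ x = 0 := fun x hx =>
      image_eq_zero_of_notMem_tsupport (fun h => hx (hφsub h))
    have hgradφ0 : ∀ x : Euc n, x ∉ ball (0:Euc n) R → gradient φ x = 0 := by
      intro x hx
      have hxs : x ∉ Function.support (fderiv ℝ φ) :=
        fun h => hx (hφsub (support_fderiv_subset ℝ h))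
      have hf : fderiv ℝ φ x = 0 := Function.notMem_support.mp hxs
      show (InnerProductSpace.toDual ℝ (Euc n)).symm (fderiv ℝ φ x) = 0
      rw [hf, map_zero]
    have hFG : ∀ x ∈ ball (0:Euc n) R,
        ‖gradient (fun y : Euc n => z ‖y‖) x‖ ^ (p-2) *
          (inner ℝ (gradient (fun y : Euc n => z ‖y‖) x) (gradient φ x) : ℝ) = Gfun x := by
      intro x hx
      have hgu := hA.2 x hx
      have hmin : min ‖x‖ R = ‖x‖ := min_eq_left (mem_ball_zero_iff.1 hx).le
      rcases eq_or_ne x 0 with rfl | hx0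
      · rw [hgu]
        simp [hGdef, hq]
      · have hn1 : ‖(‖x‖⁻¹ • x : Euc n)‖ = 1 := by
          rw [norm_smul, norm_inv, norm_norm, inv_mul_cancel₀ (norm_ne_zero_iff.2 hx0)]
        rw [hgu, hGdef]
        simp only [hmin, hq]
        rw [norm_smul, hn1, mul_one, real_inner_smul_left]
        simp only [Real.norm_eq_abs]
        ring
    have hqc : Continuous q := continuous_qfun hp
    have hminmem : ∀ x : Euc n, min ‖x‖ R ∈ Icc (0:ℝ) R := fun x =>
      ⟨le_min (norm_nonneg x) hR.le, min_le_right _ _⟩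
    have hminc : Continuous (fun x : Euc n => z' (min ‖x‖ R)) :=
      hz'c.comp_continuous (continuous_norm.min continuous_const) hminmem
    have hm1 : Continuous (fun x : Euc n => q (z' (min ‖x‖ R))) := hqc.comp hminc
    have hm2 : Measurable (fun x : Euc n => (‖x‖⁻¹ • x : Euc n)) :=
      (measurable_norm.inv).smul measurable_id
    have hGmeas : Measurable Gfun :=
      hm1.measurable.mul (hm2.inner hgradφc.measurable)
    obtain ⟨M1, hM1⟩ := isCompact_Icc.exists_bound_of_continuousOn
      ((hqc.comp_continuousOn hz'c) : ContinuousOn (fun s => q (z' s)) (Icc (0:ℝ) R))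
    obtain ⟨M2, hM2⟩ := (isCompact_closedBall (0:Euc n) R).exists_bound_of_continuousOn
      hgradφc.continuousOn
    have hG0 : ∀ x : Euc n, x ∉ ball (0:Euc n) R → Gfun x = 0 := by
      intro x hx
      rw [hGdef]
      simp only []
      rw [hgradφ0 x hx, inner_zero_right, mul_zero]
    have hωle : ∀ x : Euc n, ‖(‖x‖⁻¹ • x : Euc n)‖ ≤ 1 := by
      intro x
      rcases eq_or_ne x 0 with rfl | hx0
      · simp
      · rw [norm_smul, norm_inv, norm_norm, inv_mul_cancel₀ (norm_ne_zero_iff.2 hx0)]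
    have hGint : Integrable Gfun (volume : Measure (Euc n)) := by
      apply Integrable.mono' (g := (closedBall (0:Euc n) R).indicator fun _ => M1 * M2)
      · exact (IntegrableOn.integrable_indicator
          (integrableOn_const measure_closedBall_lt_top.ne enorm_ne_top) measurableSet_closedBall)
      · exact hGmeas.aestronglyMeasurable
      · apply ae_of_all
        intro x
        by_cases hx : x ∈ closedBall (0:Euc n) R
        · rw [indicator_of_mem hx]
          have hb1 : |q (z' (min ‖x‖ R))| ≤ M1 := by
            have := hM1 (min ‖x‖ R) (hminmem x)
            simpa using this
          have hb2 : |(inner ℝ ((‖x‖⁻¹ • x : Euc n)) (gradient φ x) : ℝ)| ≤ M2 := by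
            calc |(inner ℝ ((‖x‖⁻¹ • x : Euc n)) (gradient φ x) : ℝ)|
                ≤ ‖(‖x‖⁻¹ • x : Euc n)‖ * ‖gradient φ x‖ := abs_real_inner_le_norm _ _
              _ ≤ 1 * ‖gradient φ x‖ :=
                  mul_le_mul_of_nonneg_right (hωle x) (norm_nonneg _)
              _ = ‖gradient φ x‖ := one_mul _
              _ ≤ M2 := hM2 x hx
          have hM1nn : 0 ≤ M1 :=
            le_trans (norm_nonneg _) (hM1 0 ⟨le_refl _, hR.le⟩)
          calc ‖Gfun x‖
              = |q (z' (min ‖x‖ R))| * |(inner ℝ ((‖x‖⁻¹ • x : Euc n)) (gradient φ x) : ℝ)| := by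
                rw [hGdef]; simp only []; rw [Real.norm_eq_abs, abs_mul]
            _ ≤ M1 * M2 := mul_le_mul hb1 hb2 (abs_nonneg _) hM1nn
        · rw [indicator_of_notMem hx, hG0 x (fun h => hx (ball_subset_closedBall h))]
          simp
    have hHcont : Continuous Hfun := by
      rw [hHdef]
      apply Continuous.mul _ (hφ.continuous)
      apply Continuous.mul continuous_const
      apply Continuous.rpow_const
      · exact hzc.comp_continuous (continuous_norm.min continuous_const) hminmem
      · exact fun x => Or.inr (by linarith)
    have hHsupp : HasCompactSupport Hfun := hφsupp.mul_left
    have hHint : Integrable Hfun (volume : Measure (Euc n)) :=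
      hHcont.integrable_of_hasCompactSupport hHsupp
    have hH0 : ∀ x : Euc n, x ∉ ball (0:Euc n) R → Hfun x = 0 := by
      intro x hx
      rw [hHdef]
      simp only []
      rw [hφ0 x hx, mul_zero]
    have hrank : Module.finrank ℝ (Euc n) = n := finrank_euclideanSpace_fin
    have hGpolar := polar_integral (volume : Measure (Euc n)) Gfun
    have hHpolar := polar_integral (volume : Measure (Euc n)) Hfun
    have hGint' := polar_integrable_iff (volume : Measure (Euc n)) Gfun hGint
    have hHint' := polar_integrable_iff (volume : Measure (Euc n)) Hfun hHint
    have hFub1 := MeasureTheory.integral_prod _ hGint'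
    have hFub2 := MeasureTheory.integral_prod _ hHint'
    have hperω : ∀ ω : sphere (0:Euc n) 1,
        (∫ r : Ioi (0:ℝ), Gfun ((r : ℝ) • (ω : Euc n))
          ∂(Measure.volumeIoiPow (Module.finrank ℝ (Euc n) - 1)))
        = ∫ r : Ioi (0:ℝ), Hfun ((r : ℝ) • (ω : Euc n))
          ∂(Measure.volumeIoiPow (Module.finrank ℝ (Euc n) - 1)) := by
      intro ω
      have hω : ‖(ω : Euc n)‖ = 1 := mem_sphere_zero_iff_norm.mp ω.2
      have hnorm : ∀ r : ℝ, 0 ≤ r → ‖r • (ω : Euc n)‖ = r := fun r hr => by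
        rw [norm_smul, hω, mul_one, Real.norm_eq_abs, abs_of_nonneg hr]
      have hout : ∀ r : ℝ, R < r → (r • (ω : Euc n)) ∉ ball (0:Euc n) R := by
        intro r hrR
        rw [mem_ball_zero_iff, hnorm r (by linarith)]
        exact not_lt.2 hrR.le
      rw [integral_volumeIoiPow _ (fun s : ℝ => Gfun (s • (ω : Euc n))),
        integral_volumeIoiPow _ (fun s : ℝ => Hfun (s • (ω : Euc n))), hrank]
      have hres : ∀ (f : Euc n → ℝ), (∀ x : Euc n, x ∉ ball (0:Euc n) R → f x = 0) →
          (∫ r in Ioi (0:ℝ), r ^ (n-1) * f (r • (ω : Euc n)))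
          = ∫ r in (0:ℝ)..R, r ^ (n-1) * f (r • (ω : Euc n)) := by
        intro f hf
        rw [intervalIntegral.integral_of_le hR.le]
        apply setIntegral_eq_of_subset_of_forall_diff_eq_zero measurableSet_Ioi
          Ioc_subset_Ioi_self
        intro r hr
        obtain ⟨h2, h3⟩ := hr
        have h1 : R < r := by
          simp only [mem_Ioc, not_and, not_le] at h3
          exact h3 h2
        rw [hf _ (hout r h1), mul_zero]
      rw [hres Gfun hG0, hres Hfun hH0]
      set ψ : ℝ → ℝ := fun r => φ (r • (ω : Euc n)) with hψdef
      set D : ℝ → ℝ := fun r =>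
        (inner ℝ ((ω : Euc n)) (gradient φ (r • (ω : Euc n))) : ℝ) with hDdef
      have hψd : ∀ r : ℝ, HasDerivAt ψ (D r) r := by
        intro r
        have h1 : HasDerivAt (fun s : ℝ => s • (ω : Euc n)) ((ω : Euc n)) r := by
          simpa using (hasDerivAt_id r).smul_const ((ω : Euc n))
        have h2 : HasFDerivAt φ (fderiv ℝ φ (r • (ω : Euc n))) (r • (ω : Euc n)) :=
          ((hφ.differentiable (by simp)) _).hasFDerivAt
        have h3 := h2.comp_hasDerivAt r h1
        have h4 : D r = fderiv ℝ φ (r • (ω : Euc n)) ((ω : Euc n)) := by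
          rw [hDdef]
          simp only []
          rw [real_inner_comm]
          exact inner_gradient_apply φ _ _
        rw [h4]
        exact h3
      have hDc : Continuous D :=
        Continuous.inner continuous_const (hgradφc.comp (continuous_id.smul continuous_const))
      have hψc : Continuous ψ := hφ.continuous.comp (continuous_id.smul continuous_const)
      have hψR : ψ R = 0 := by
        apply hφ0
        rw [mem_ball_zero_iff, hnorm R hR.le]
        exact lt_irrefl R
      have hL : EqOn (fun r : ℝ => r ^ (n-1) * Gfun (r • (ω : Euc n)))
          (fun r : ℝ => w r * D r) (uIcc (0:ℝ) R) := by
        intro r hr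
        rw [uIcc_of_le hR.le] at hr
        rcases eq_or_ne r 0 with rfl | hr0
        · simp only [hw]
          simp [zero_pow (by omega : n - 1 ≠ 0)]
        · have hrpos : 0 < r := lt_of_le_of_ne hr.1 (Ne.symm hr0)
          have hnr : ‖r • (ω : Euc n)‖ = r := hnorm r hr.1
          have hmin : min ‖r • (ω : Euc n)‖ R = r := by rw [hnr]; exact min_eq_left hr.2
          have hinv : ((‖r • (ω : Euc n)‖⁻¹ • (r • (ω : Euc n))) : Euc n) = (ω : Euc n) := by
            rw [hnr, smul_smul, inv_mul_cancel₀ (ne_of_gt hrpos), one_smul]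
          simp only [hGdef, hq, hw, hDdef, hmin, hinv]
          ring
      have hHr : EqOn (fun r : ℝ => r ^ (n-1) * Hfun (r • (ω : Euc n)))
          (fun r : ℝ => lam * r ^ (n-1) * z r ^ (p-1) * ψ r) (uIcc (0:ℝ) R) := by
        intro r hr
        rw [uIcc_of_le hR.le] at hr
        have hnr : ‖r • (ω : Euc n)‖ = r := hnorm r hr.1
        have hmin : min ‖r • (ω : Euc n)‖ R = r := by rw [hnr]; exact min_eq_left hr.2
        simp only [hHdef, hψdef, hmin]
        ring
      rw [intervalIntegral.integral_congr hL, intervalIntegral.integral_congr hHr]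
      exact onedim_ibp n hn hp hR hz hz'c hw hode hψd hDc hψc hψR
    have e1 : (∫ x in ball (0:Euc n) R, ‖gradient (fun y : Euc n => z ‖y‖) x‖ ^ (p - 2) *
        (inner ℝ (gradient (fun y : Euc n => z ‖y‖) x) (gradient φ x) : ℝ))
        = ∫ x, Gfun x := by
      rw [setIntegral_congr_fun measurableSet_ball hFG]
      exact setIntegral_eq_integral_of_forall_compl_eq_zero hG0
    have e2 : (∫ x in ball (0:Euc n) R, (lam * (z ‖x‖) ^ (p-1)) * φ x)
        = ∫ x, Hfun x := by
      have hHb : EqOn (fun x : Euc n => (lam * (z ‖x‖) ^ (p-1)) * φ x) Hfun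
          (ball (0:Euc n) R) := by
        intro x hx
        have hmin : min ‖x‖ R = ‖x‖ := min_eq_left (mem_ball_zero_iff.1 hx).le
        simp only [hHdef, hmin]
      rw [setIntegral_congr_fun measurableSet_ball hHb]
      exact setIntegral_eq_integral_of_forall_compl_eq_zero hH0
    rw [e1, e2, hGpolar, hHpolar, hFub1, hFub2]
    exact integral_congr_ae (Filter.Eventually.of_forall (fun ω => hperω ω))
  exact ⟨⟨hweak, hpos, hcont, hsph⟩, hR, ⟨fun x : Euc n => z ‖x‖, hweak, hpos, hcont, hsph⟩⟩
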